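/- Let r ≥ 1 and let z = (z₀⁽¹⁾, z₁⁽¹⁾, z₀⁽²⁾, z₀⁽³⁾) ∈ Mat(2r × 4r, ℂ) be written in blocks in Mat(2r × r, ℂ), and assume det(z₀⁽¹⁾ | z₁⁽¹⁾) ≠ 0, det(z₀⁽¹⁾ | z₀⁽²⁾) ≠ 0, det(z₀⁽¹⁾ | z₀⁽³⁾) ≠ 0 and det(z₀⁽²⁾ | z₀⁽³⁾) ≠ 0. Then there exist g ∈ GL(2r, ℂ), h ∈ H_{(2,1,1)}, and x' ∈ GL(r, ℂ) such that g · z · h is the 2r×4r matrix with block rows (1_r, 0, 0, 1_r) and (0, 1_r, 1_r, −x'). -/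

import Mathlib

open Matrix

/-- The `2r × nr` matrix assembled from `n` block columns of size `2r × r`. -/
def ofBlockCols (r n : ℕ) (z : Fin n → Matrix (Fin r ⊕ Fin r) (Fin r) ℂ) :
    Matrix (Fin r ⊕ Fin r) (Fin n × Fin r) ℂ :=
  Matrix.of fun i jk => z jk.1 i jk.2

/-- The `nr × nr` matrix assembled from an `n × n` array of `r × r` blocks. -/
def ofBlockMat (r n : ℕ) (H : Fin n → Fin n → Matrix (Fin r) (Fin r) ℂ) :
    Matrix (Fin n × Fin r) (Fin n × Fin r) ℂ :=
  Matrix.of fun jk lk => H jk.1 lk.1 jk.2 lk.2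

lemma mul_ofBlockCols (r n : ℕ) (M : Matrix (Fin r ⊕ Fin r) (Fin r ⊕ Fin r) ℂ)
    (z : Fin n → Matrix (Fin r ⊕ Fin r) (Fin r) ℂ) :
    M * ofBlockCols r n z = ofBlockCols r n (fun j => M * z j) := by
  ext i jk
  simp [ofBlockCols, Matrix.mul_apply]

lemma ofBlockCols_mul_ofBlockMat (r n : ℕ) (z : Fin n → Matrix (Fin r ⊕ Fin r) (Fin r) ℂ)
    (H : Fin n → Fin n → Matrix (Fin r) (Fin r) ℂ) :
    ofBlockCols r n z * ofBlockMat r n H =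
      ofBlockCols r n (fun l => ∑ j, z j * H j l) := by
  ext i lk
  simp only [ofBlockCols, ofBlockMat, Matrix.mul_apply, Matrix.of_apply,
    Matrix.sum_apply]
  rw [Fintype.sum_prod_type]

lemma fromRows_add {m₁ m₂ n : Type*} (A C : Matrix m₁ n ℂ) (B D : Matrix m₂ n ℂ) :
    fromRows A B + fromRows C D = fromRows (A + C) (B + D) := by
  ext i j
  cases i <;> simp [fromRows] <;> rfl

/-- Normal form lemma (form `x₂`) for `(m, N) = (2r, 4r)`, partition `λ = (2,1,1)`:
`z = (z₀⁽¹⁾, z₁⁽¹⁾, z₀⁽²⁾, z₀⁽³⁾)` with the stated nondegeneracy conditions can be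
brought, by the action of `GL(2r, ℂ) × H_{(2,1,1)}`, to the normal form with block rows
`(1_r, 0, 0, 1_r)` and `(0, 1_r, 1_r, −x')` with `x' ∈ GL(r, ℂ)`. -/
theorem normal_form_partition_211_second (r : ℕ) (hr : 1 ≤ r)
    (z : Fin 4 → Matrix (Fin r ⊕ Fin r) (Fin r) ℂ)
    (h01 : (fromCols (z 0) (z 1)).det ≠ 0)
    (h02 : (fromCols (z 0) (z 2)).det ≠ 0)
    (h03 : (fromCols (z 0) (z 3)).det ≠ 0)
    (h23 : (fromCols (z 2) (z 3)).det ≠ 0) :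
    ∃ (g : GL (Fin r ⊕ Fin r) ℂ) (h₀ k l : GL (Fin r) ℂ)
      (h₁ : Matrix (Fin r) (Fin r) ℂ) (x : GL (Fin r) ℂ),
      (g : Matrix (Fin r ⊕ Fin r) (Fin r ⊕ Fin r) ℂ) * ofBlockCols r 4 z *
          ofBlockMat r 4
            ![![(h₀ : Matrix (Fin r) (Fin r) ℂ), h₁, 0, 0],
              ![0, (h₀ : Matrix (Fin r) (Fin r) ℂ), 0, 0],
              ![0, 0, (k : Matrix (Fin r) (Fin r) ℂ), 0],
              ![0, 0, 0, (l : Matrix (Fin r) (Fin r) ℂ)]] =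
        ofBlockCols r 4
          ![fromRows 1 0, fromRows 0 1, fromRows 0 1,
            fromRows 1 (-(x : Matrix (Fin r) (Fin r) ℂ))] := by
  set G := fromCols (z 0) (z 2) with hGdef
  have hGdet : IsUnit G.det := isUnit_iff_ne_zero.mpr h02
  have hGinvdet : IsUnit G⁻¹.det := G.isUnit_nonsing_inv_det hGdet
  have hGinv : G⁻¹ * G = 1 := nonsing_inv_mul G hGdet
  have hcols : fromCols (G⁻¹ * z 0) (G⁻¹ * z 2) =
      fromCols (fromRows 1 0) (fromRows 0 1) := by
    rw [← mul_fromCols, ← hGdef, hGinv, fromCols_fromRows_eq_fromBlocks,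
      fromBlocks_one]
  have hz0 : G⁻¹ * z 0 = fromRows 1 0 := by
    have := congrArg toCols₁ hcols
    rwa [toCols₁_fromCols, toCols₁_fromCols] at this
  have hz2 : G⁻¹ * z 2 = fromRows 0 1 := by
    have := congrArg toCols₂ hcols
    rwa [toCols₂_fromCols, toCols₂_fromCols] at this
  set a := toRows₁ (G⁻¹ * z 1) with hadef
  set b := toRows₂ (G⁻¹ * z 1) with hbdef
  set c := toRows₁ (G⁻¹ * z 3) with hcdef
  set d := toRows₂ (G⁻¹ * z 3) with hddef
  have hz1 : G⁻¹ * z 1 = fromRows a b := (fromRows_toRows _).symm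
  have hz3 : G⁻¹ * z 3 = fromRows c d := (fromRows_toRows _).symm
  -- determinant of b
  have hb : IsUnit b.det := by
    have h : (G⁻¹ * fromCols (z 0) (z 1)).det ≠ 0 := by
      rw [det_mul]
      exact mul_ne_zero hGinvdet.ne_zero h01
    rw [mul_fromCols, hz0, hz1, fromCols_fromRows_eq_fromBlocks,
      det_fromBlocks_zero₂₁, det_one, one_mul] at h
    exact isUnit_iff_ne_zero.mpr h
  -- determinant of d
  have hd : IsUnit d.det := by
    have h : (G⁻¹ * fromCols (z 0) (z 3)).det ≠ 0 := by
      rw [det_mul]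
      exact mul_ne_zero hGinvdet.ne_zero h03
    rw [mul_fromCols, hz0, hz3, fromCols_fromRows_eq_fromBlocks,
      det_fromBlocks_zero₂₁, det_one, one_mul] at h
    exact isUnit_iff_ne_zero.mpr h
  -- determinant of c
  have hc : IsUnit c.det := by
    have h : (G⁻¹ * fromCols (z 2) (z 3)).det ≠ 0 := by
      rw [det_mul]
      exact mul_ne_zero hGinvdet.ne_zero h23
    rw [mul_fromCols, hz2, hz3, fromCols_fromRows_eq_fromBlocks] at h
    haveI : Invertible d := d.invertibleOfIsUnitDet hd
    rw [det_fromBlocks₂₂] at h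
    have h' : ((0 : Matrix (Fin r) (Fin r) ℂ) - c * ⅟d * 1).det ≠ 0 :=
      fun hz => h (by rw [hz, mul_zero])
    rw [Matrix.mul_one, zero_sub, det_neg, det_mul] at h'
    have := right_ne_zero_of_mul h'
    exact isUnit_iff_ne_zero.mpr (left_ne_zero_of_mul this)
  have hbinv : b⁻¹ * b = 1 := nonsing_inv_mul b hb
  have hcinv : c * c⁻¹ = 1 := mul_nonsing_inv c hc
  set S : Matrix (Fin r ⊕ Fin r) (Fin r ⊕ Fin r) ℂ := fromBlocks 1 0 0 b⁻¹ with hSdef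
  have hSdet : IsUnit S.det := by
    rw [hSdef, det_fromBlocks_zero₂₁, det_one, one_mul]
    exact b.isUnit_nonsing_inv_det hb
  -- the units
  have hGu : IsUnit G := (isUnit_iff_isUnit_det G).mpr hGdet
  have hSu : IsUnit S := (isUnit_iff_isUnit_det S).mpr hSdet
  have hbu : IsUnit b := (isUnit_iff_isUnit_det b).mpr hb
  have hcu : IsUnit c := (isUnit_iff_isUnit_det c).mpr hc
  set xm : Matrix (Fin r) (Fin r) ℂ := -(b⁻¹ * d * c⁻¹) with hxmdef
  have hxu : IsUnit xm := by
    rw [isUnit_iff_isUnit_det, hxmdef, det_neg, det_mul, det_mul]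
    exact ((isUnit_one.neg.pow _).mul
      (((b.isUnit_nonsing_inv_det hb).mul hd).mul (c.isUnit_nonsing_inv_det hc)))
  refine ⟨hSu.unit * hGu.unit⁻¹, 1, hbu.unit, hcu.unit⁻¹, -a, hxu.unit, ?_⟩
  have hgcoe : ((hSu.unit * hGu.unit⁻¹ : _ˣ) : Matrix (Fin r ⊕ Fin r) (Fin r ⊕ Fin r) ℂ)
      = S * G⁻¹ := by
    rw [Units.val_mul, hSu.unit_spec, coe_units_inv, hGu.unit_spec]
  rw [hgcoe, Matrix.mul_assoc, ofBlockCols_mul_ofBlockMat, mul_ofBlockCols]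
  refine congrArg (ofBlockCols r 4) (funext fun j => ?_)
  fin_cases j <;>
    simp only [Fin.sum_univ_four, Matrix.cons_val_zero, Matrix.cons_val_one,
      Matrix.head_cons, Matrix.cons_val_two, Matrix.tail_cons, Matrix.cons_val_three,
      Matrix.mul_zero, Matrix.zero_mul, add_zero, zero_add, Matrix.mul_one,
      Units.val_one, hSu.unit_spec, hbu.unit_spec, hxu.unit_spec, coe_units_inv,
      hcu.unit_spec, Fin.isValue, Matrix.cons_val', Matrix.cons_val_fin_one,
      Matrix.empty_val']
  · -- column 0
    show S * G⁻¹ * (z 0 * 1 + z 1 * 0 + z 2 * 0 + z 3 * 0) = fromRows 1 0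
    simp only [Matrix.mul_one, Matrix.mul_zero, add_zero]
    rw [Matrix.mul_assoc, hz0, hSdef, fromBlocks_mul_fromRows]
    simp
  · -- column 1
    show S * G⁻¹ * (z 0 * (-a) + z 1 * 1 + z 2 * 0 + z 3 * 0) = fromRows 0 1
    simp only [Matrix.mul_one, Matrix.mul_zero, add_zero]
    rw [Matrix.mul_assoc S, Matrix.mul_add, ← Matrix.mul_assoc G⁻¹ (z 0), hz0, hz1,
      fromRows_mul, fromRows_add]
    simp only [Matrix.one_mul, Matrix.zero_mul, neg_add_cancel, zero_add]
    rw [hSdef, fromBlocks_mul_fromRows]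
    simp [hbinv]
  · -- column 2
    show S * G⁻¹ * (z 0 * 0 + z 1 * 0 + z 2 * b + z 3 * 0) = fromRows 0 1
    simp only [Matrix.mul_zero, add_zero, zero_add]
    rw [Matrix.mul_assoc S, ← Matrix.mul_assoc G⁻¹, hz2, fromRows_mul, hSdef,
      fromBlocks_mul_fromRows]
    simp [hbinv]
  · -- column 3
    show S * G⁻¹ * (z 0 * 0 + z 1 * 0 + z 2 * 0 + z 3 * c⁻¹) = fromRows 1 (-xm)
    simp only [Matrix.mul_zero, add_zero, zero_add]
    rw [Matrix.mul_assoc S, ← Matrix.mul_assoc G⁻¹, hz3, fromRows_mul, hSdef,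
      fromBlocks_mul_fromRows, hxmdef, neg_neg]
    simp [hcinv, Matrix.mul_assoc]
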